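/- Suppose (g,K,θ) satisfies condition (E), g(K) ⊆ K, and g⁻¹(K) = K. Then for every β ∈ (0, θ/2], every infinite β-pseudoorbit (x_n)_{n=0}^∞ for g contained in B(K, θ/4) is β-shadowed by a unique element of K: there exists exactly one x ∈ K with ρ(g^n(x), x_n) ≤ β for all n ≥ 0. -/

import Mathlib

/-- Condition (E): for every `x` in the closed `θ`-neighborhood of `K` and every `y`
with `ρ(x,y) ≤ θ`, one has `ρ(g(x),g(y)) ≥ 2ρ(x,y)`; moreover `g` is injective on
`B(x,θ)` and `g(B(x,θ)) ⊇ B(g(x),2θ)`. -/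
def CondE {Z : Type*} [MetricSpace Z] (g : Z → Z) (K : Set Z) (θ : ℝ) : Prop :=
  ∀ x : Z, Metric.infDist x K ≤ θ →
    (∀ y : Z, dist x y ≤ θ → 2 * dist x y ≤ dist (g x) (g y)) ∧
    Set.InjOn g (Metric.ball x θ) ∧
    Metric.ball (g x) (2 * θ) ⊆ g '' Metric.ball x θ

/-- Proposition 4.7 (shadowing lemma): every infinite `β`-pseudoorbit (with
`β ∈ (0, θ/2]`) contained in the open `θ/4`-neighborhood of `K` is `β`-shadowed
by a unique element of `K`. -/
theorem stmt6 {Z : Type*} [MetricSpace Z] [CompactSpace Z]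
    (g : Z → Z) (hg : Continuous g)
    (K : Set Z) (hK : IsCompact K) (hKne : K.Nonempty)
    (θ : ℝ) (hθ : 0 < θ) (hE : CondE g K θ)
    (hmaps : Set.MapsTo g K K) (hpre : g ⁻¹' K = K)
    (β : ℝ) (hβ : 0 < β) (hβθ : β ≤ θ / 2)
    (x : ℕ → Z)
    (hpseudo : ∀ n : ℕ, dist (g (x n)) (x (n + 1)) ≤ β)
    (hin : ∀ n : ℕ, Metric.infDist (x n) K < θ / 4) :
    ∃! p : Z, p ∈ K ∧ ∀ n : ℕ, dist (g^[n] p) (x n) ≤ β := by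
  classical
  set γ : ℝ := max β (θ/4) with hγdef
  have hβγ : β ≤ γ := le_max_left _ _
  have hθγ : θ/4 ≤ γ := le_max_right _ _
  have hγθ : γ ≤ θ/2 := max_le hβθ (by linarith)
  have hγ0 : 0 < γ := lt_of_lt_of_le hβ hβγ
  -- expansion lemma
  have Hexpand : ∀ (m : ℕ) (p q : Z),
      (∀ i, i < m → Metric.infDist (g^[i] p) K ≤ θ ∧ dist (g^[i] p) (g^[i] q) ≤ θ) →
      2^m * dist p q ≤ dist (g^[m] p) (g^[m] q) := by
    intro m
    induction m with
    | zero => intro p q _; simp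
    | succ m ih =>
      intro p q h
      have h1 := ih p q (fun i hi => h i (Nat.lt_succ_of_lt hi))
      have h2 := h m (Nat.lt_succ_self m)
      have h3 := (hE _ h2.1).1 (g^[m] q) h2.2
      rw [Function.iterate_succ_apply', Function.iterate_succ_apply']
      have hd : (0:ℝ) ≤ dist p q := dist_nonneg
      have hpow : (0:ℝ) ≤ 2^m := by positivity
      calc (2:ℝ)^(m+1) * dist p q = 2 * (2^m * dist p q) := by ring
        _ ≤ 2 * dist (g^[m] p) (g^[m] q) := by linarith
        _ ≤ dist (g (g^[m] p)) (g (g^[m] q)) := h3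
  -- preimages of K are in K
  have HK : ∀ (m : ℕ) (p : Z), g^[m] p ∈ K → p ∈ K := by
    intro m
    induction m with
    | zero => intro p hp; simpa using hp
    | succ m ih =>
      intro p hp
      rw [Function.iterate_succ_apply] at hp
      have := ih (g p) hp
      rw [← hpre]; exact this
  -- nearest points in K
  have hk : ∀ n : ℕ, ∃ k ∈ K, dist (x n) k ≤ θ/4 := by
    intro n
    obtain ⟨k, hkK, hkd⟩ := hK.exists_infDist_eq_dist hKne (x n)
    exact ⟨k, hkK, by rw [← hkd]; exact (hin n).le⟩
  choose kpt hkK hkd using hk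
  -- pullback function
  have hpull : ∀ (n : ℕ) (z : Z), ∃ w : Z,
      dist z (x (n+1)) ≤ θ/2 → (g w = z ∧ 2 * dist (x n) w ≤ dist (g (x n)) z) := by
    intro n z
    by_cases h : dist z (x (n+1)) ≤ θ/2
    · have hinf : Metric.infDist (x n) K ≤ θ := by linarith [hin n]
      obtain ⟨hexp, hinj, hsurj⟩ := hE (x n) hinf
      have hz : z ∈ Metric.ball (g (x n)) (2 * θ) := by
        rw [Metric.mem_ball]
        calc dist z (g (x n)) ≤ dist z (x (n+1)) + dist (x (n+1)) (g (x n)) := dist_triangle _ _ _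
          _ ≤ θ/2 + β := by rw [dist_comm (x (n+1))]; linarith [hpseudo n]
          _ < 2 * θ := by linarith
      obtain ⟨w, hw, hgw⟩ := hsurj hz
      refine ⟨w, fun _ => ⟨hgw, ?_⟩⟩
      rw [← hgw]
      exact hexp w (le_of_lt (Metric.mem_ball'.mp hw))
    · exact ⟨z, fun h' => absurd h' h⟩
  choose pull hpullspec using hpull
  -- the backward chains
  let c : ℕ → ℕ → Z := fun N j => Nat.rec (kpt N) (fun j' w => pull (N - (j'+1)) w) j
  have hc0 : ∀ N, c N 0 = kpt N := fun N => rfl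
  have hcs : ∀ N j, c N (j+1) = pull (N - (j+1)) (c N j) := fun N j => rfl
  -- main distance invariant
  have Hmain : ∀ N j, j ≤ N → dist (c N j) (x (N - j)) ≤ γ ∧
      dist (c N j) (x (N - j)) ≤ β + (θ/4) * (1/2)^j := by
    intro N j
    induction j with
    | zero =>
      intro _
      have : dist (c N 0) (x N) ≤ θ/4 := by rw [hc0, dist_comm]; exact hkd N
      constructor
      · simpa using this.trans hθγ
      · simp only [Nat.sub_zero, pow_zero, mul_one]
        linarith
    | succ j ih =>
      intro hjN
      have hj := ih (Nat.le_of_succ_le hjN)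
      have hn1 : (N - (j+1)) + 1 = N - j := by omega
      have hcond : dist (c N j) (x ((N - (j+1)) + 1)) ≤ θ/2 := by
        rw [hn1]; exact hj.1.trans hγθ
      obtain ⟨hgw, hdist⟩ := hpullspec (N - (j+1)) (c N j) hcond
      have htri : dist (g (x (N - (j+1)))) (c N j) ≤ β + dist (c N j) (x (N - j)) := by
        calc dist (g (x (N - (j+1)))) (c N j)
            ≤ dist (g (x (N - (j+1)))) (x ((N - (j+1)) + 1)) + dist (x ((N - (j+1)) + 1)) (c N j) :=
              dist_triangle _ _ _
          _ ≤ β + dist (c N j) (x (N - j)) := by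
              have hps := hpseudo (N - (j+1))
              rw [hn1] at hps
              rw [hn1, dist_comm (x (N - j))]
              linarith
      have hkey : 2 * dist (x (N - (j+1))) (c N (j+1)) ≤ β + dist (c N j) (x (N - j)) := by
        rw [hcs]
        exact hdist.trans htri
      rw [dist_comm (x (N - (j+1)))] at hkey
      constructor
      · linarith [hj.1]
      · have hpow : ((1:ℝ)/2)^(j+1) = (1/2) * (1/2)^j := by ring
        rw [hpow]
        linarith [hj.2]
  -- iterate relation
  have Hlink : ∀ N j, j + 1 ≤ N → g (c N (j+1)) = c N j := by
    intro N j hjN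
    have hj := (Hmain N j (by omega)).1
    have hn1 : (N - (j+1)) + 1 = N - j := by omega
    have hcond : dist (c N j) (x ((N - (j+1)) + 1)) ≤ θ/2 := by
      rw [hn1]; exact hj.trans hγθ
    rw [hcs]
    exact (hpullspec (N - (j+1)) (c N j) hcond).1
  have Hiter : ∀ N n, n ≤ N → g^[n] (c N N) = c N (N - n) := by
    intro N n
    induction n with
    | zero => intro _; simp
    | succ n ih =>
      intro hnN
      have hIH := ih (Nat.le_of_succ_le hnN)
      rw [Function.iterate_succ_apply', hIH]
      have hj : (N - (n+1)) + 1 = N - n := by omega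
      have := Hlink N (N - (n+1)) (by omega)
      rw [hj] at this
      rw [this]
  -- the approximating shadow points
  set pseq : ℕ → Z := fun N => c N N with hpseqdef
  have hpK : ∀ N, pseq N ∈ K := by
    intro N
    apply HK N
    rw [Hiter N N le_rfl]
    simpa [hc0] using hkK N
  have Hsh : ∀ N n, n ≤ N → dist (g^[n] (pseq N)) (x n) ≤ β + (θ/4) * (1/2)^(N-n) ∧
      dist (g^[n] (pseq N)) (x n) ≤ γ := by
    intro N n hnN
    have := Hmain N (N - n) (by omega)
    have hnn : N - (N - n) = n := by omega
    rw [hnn] at this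
    rw [Hiter N n hnN]
    exact ⟨this.2, this.1⟩
  -- Cauchy
  have hcons : ∀ N, dist (pseq N) (pseq (N+1)) ≤ (2*γ) * (1/2)^N := by
    intro N
    have hexp := Hexpand N (pseq N) (pseq (N+1)) ?_
    · have hlast : dist (g^[N] (pseq N)) (g^[N] (pseq (N+1))) ≤ 2*γ := by
        calc dist (g^[N] (pseq N)) (g^[N] (pseq (N+1)))
            ≤ dist (g^[N] (pseq N)) (x N) + dist (x N) (g^[N] (pseq (N+1))) := dist_triangle _ _ _
          _ ≤ γ + γ := by
              rw [dist_comm (x N)]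
              linarith [(Hsh N N le_rfl).2, (Hsh (N+1) N (by omega)).2]
          _ = 2*γ := by ring
      have h2N : (0:ℝ) < 2^N := by positivity
      have : 2^N * dist (pseq N) (pseq (N+1)) ≤ 2*γ := hexp.trans hlast
      rw [show ((1:ℝ)/2)^N = (2^N)⁻¹ by rw [one_div, inv_pow], mul_comm (2*γ),
        ← div_eq_inv_mul, le_div_iff₀ h2N]
      linarith [this, mul_comm (dist (pseq N) (pseq (N+1))) ((2:ℝ)^N)]
    · intro i hi
      constructor
      · have : g^[i] (pseq N) ∈ K := (hmaps.iterate i) (hpK N)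
        rw [Metric.infDist_zero_of_mem this]; exact hθ.le
      · calc dist (g^[i] (pseq N)) (g^[i] (pseq (N+1)))
            ≤ dist (g^[i] (pseq N)) (x i) + dist (x i) (g^[i] (pseq (N+1))) := dist_triangle _ _ _
          _ ≤ γ + γ := by
              rw [dist_comm (x i)]
              linarith [(Hsh N i (by omega)).2, (Hsh (N+1) i (by omega)).2]
          _ ≤ θ := by linarith
  have hcauchy : CauchySeq pseq := cauchySeq_of_le_geometric (1/2) (2*γ) (by norm_num) hcons
  obtain ⟨p, hp⟩ := cauchySeq_tendsto_of_complete hcauchy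
  have hpK' : p ∈ K := hK.isClosed.mem_of_tendsto hp (Filter.Eventually.of_forall hpK)
  -- shadowing bound for p
  have hshadow : ∀ n : ℕ, dist (g^[n] p) (x n) ≤ β := by
    intro n
    have h1 : Filter.Tendsto (fun N => dist (g^[n] (pseq N)) (x n)) Filter.atTop
        (nhds (dist (g^[n] p) (x n))) :=
      (((hg.iterate n).tendsto p).comp hp).dist tendsto_const_nhds
    have hpow : Filter.Tendsto (fun N : ℕ => ((1:ℝ)/2)^(N - n)) Filter.atTop (nhds 0) :=
      (tendsto_pow_atTop_nhds_zero_of_lt_one (by norm_num) (by norm_num)).comp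
        (Filter.tendsto_sub_atTop_nat n)
    have h2 : Filter.Tendsto (fun N : ℕ => β + (θ/4) * ((1:ℝ)/2)^(N - n)) Filter.atTop
        (nhds β) := by
      have := (hpow.const_mul (θ/4)).const_add β
      simpa using this
    refine le_of_tendsto_of_tendsto h1 h2 ?_
    filter_upwards [Filter.eventually_ge_atTop n] with N hN
    exact (Hsh N n hN).1
  refine ⟨p, ⟨hpK', hshadow⟩, ?_⟩
  rintro q ⟨hqK, hq⟩
  -- uniqueness
  have huniq : ∀ m : ℕ, dist q p ≤ (2*β) * (1/2)^m := by
    intro m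
    have hexp := Hexpand m q p ?_
    · have hlast : dist (g^[m] q) (g^[m] p) ≤ 2*β := by
        calc dist (g^[m] q) (g^[m] p)
            ≤ dist (g^[m] q) (x m) + dist (x m) (g^[m] p) := dist_triangle _ _ _
          _ ≤ β + β := by rw [dist_comm (x m)]; linarith [hq m, hshadow m]
          _ = 2*β := by ring
      have h2m : (0:ℝ) < 2^m := by positivity
      have := hexp.trans hlast
      rw [show ((1:ℝ)/2)^m = (2^m)⁻¹ by rw [one_div, inv_pow], mul_comm (2*β),
        ← div_eq_inv_mul, le_div_iff₀ h2m]
      linarith [mul_comm (dist q p) ((2:ℝ)^m)]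
    · intro i hi
      constructor
      · rw [Metric.infDist_zero_of_mem ((hmaps.iterate i) hqK)]; exact hθ.le
      · calc dist (g^[i] q) (g^[i] p)
            ≤ dist (g^[i] q) (x i) + dist (x i) (g^[i] p) := dist_triangle _ _ _
          _ ≤ β + β := by rw [dist_comm (x i)]; linarith [hq i, hshadow i]
          _ ≤ θ := by linarith
  have hlim : Filter.Tendsto (fun m : ℕ => (2*β) * ((1:ℝ)/2)^m) Filter.atTop (nhds 0) := by
    have := (tendsto_pow_atTop_nhds_zero_of_lt_one (show (0:ℝ) ≤ 1/2 by norm_num)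
      (by norm_num)).const_mul (2*β)
    simpa using this
  have h0 : dist q p ≤ 0 :=
    le_of_tendsto_of_tendsto' tendsto_const_nhds hlim huniq
  exact dist_le_zero.mp h0
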